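/- arXiv:quant-ph/0208151 — 2 statements merged into one kernel-verified Lean document; each statement's English description precedes it below -/
import Mathlib

section
/- Let 𝓗 be a complex Hilbert space, let P and R be commuting unitary operators on 𝓗 with P² = R² = 𝟙, let σ, λ ∈ ℝ, and let 𝓚₋ := {ψ ∈ 𝓗 : Pψ = −ψ}; assume 𝓚₋ ≠ {0}. Consider the three conditions: (i) for every ψ ∈ 𝓚₋, e^{iπλ}·P(Rψ) = −e^{2πiσ}·ψ; (ii) λ − 2σ ∈ 1 + 2ℤ; (iii) for every ψ ∈ 𝓚₋, Rψ = −ψ. Then any two of the conditions (i), (ii), (iii) imply the third. [This is Lemma 6(ii), with P playing the role of the z-parity P_z, R the half-rotation R_z = e^{iπℓ_z}, and (i) expressing that the statistics phase κ = P_z e^{iπĵ_z} restricted to the odd subspace 𝓗₋ equals −e^{2πiσ}.] -/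
open Real

lemma exp_pi_mul_I_eq_neg_one_iff (a : ℝ) :
    Complex.exp ((π * a : ℝ) * Complex.I) = -1 ↔ ∃ k : ℤ, a = 1 + 2 * k := by
  rw [show (-1 : ℂ) = Complex.exp ((π : ℂ) * Complex.I) from Complex.exp_pi_mul_I.symm,
      Complex.exp_eq_exp_iff_exists_int]
  constructor
  · rintro ⟨n, hn⟩
    refine ⟨n, ?_⟩
    have hπI : ((π : ℂ) * Complex.I) ≠ 0 :=
      mul_ne_zero (by exact_mod_cast Real.pi_ne_zero) Complex.I_ne_zero
    have h : ((a : ℂ) - 1 - 2 * n) * ((π : ℂ) * Complex.I) = 0 := by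
      push_cast at hn; linear_combination hn
    have h2 : (a : ℂ) = 1 + 2 * n := by
      rcases mul_eq_zero.mp h with h | h
      · linear_combination h
      · exact absurd h hπI
    exact_mod_cast h2
  · rintro ⟨k, hk⟩
    exact ⟨k, by push_cast [hk]; ring⟩

lemma exp_eq_neg_exp_iff (σ lam : ℝ) :
    Complex.exp ((π * lam : ℝ) * Complex.I) = -Complex.exp ((2 * π * σ : ℝ) * Complex.I)
    ↔ ∃ k : ℤ, lam - 2 * σ = 1 + 2 * k := by
  rw [← exp_pi_mul_I_eq_neg_one_iff (lam - 2 * σ)]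
  have hd : Complex.exp ((2 * π * σ : ℝ) * Complex.I) ≠ 0 := Complex.exp_ne_zero _
  have hmul : Complex.exp ((π * lam : ℝ) * Complex.I) =
      Complex.exp ((π * (lam - 2 * σ) : ℝ) * Complex.I) *
        Complex.exp ((2 * π * σ : ℝ) * Complex.I) := by
    rw [← Complex.exp_add]; congr 1; push_cast; ring
  rw [hmul]
  constructor
  · intro h
    refine mul_right_cancel₀ hd (h.trans ?_)
    rw [neg_one_mul]
  · intro h
    rw [h, neg_one_mul]

/-- **Lemma 6(ii).** Let `𝓗` be a complex Hilbert space, `P` and `R` commuting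
unitary involutions on `𝓗`, `σ, λ ∈ ℝ`, and `𝓚₋ = {ψ : Pψ = -ψ}` nonzero.
Of the conditions
(i) `e^{iπλ}·P·R = -e^{2πiσ}·𝟙` on `𝓚₋`, (ii) `λ - 2σ ∈ 1 + 2ℤ`,
(iii) `R = -𝟙` on `𝓚₋`, any two imply the third. -/
theorem two_of_three_spin_statistics_odd
    {𝓗 : Type*} [NormedAddCommGroup 𝓗] [InnerProductSpace ℂ 𝓗] [CompleteSpace 𝓗]
    (P R : 𝓗 ≃ₗᵢ[ℂ] 𝓗)
    (hP : ∀ ψ : 𝓗, P (P ψ) = ψ) (hR : ∀ ψ : 𝓗, R (R ψ) = ψ)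
    (hPR : ∀ ψ : 𝓗, P (R ψ) = R (P ψ))
    (σ lam : ℝ)
    (hne : ∃ ψ : 𝓗, P ψ = -ψ ∧ ψ ≠ 0) :
    ((∀ ψ : 𝓗, P ψ = -ψ → Complex.exp ((π * lam : ℝ) * Complex.I) • P (R ψ)
          = -(Complex.exp ((2 * π * σ : ℝ) * Complex.I) • ψ)) →
        (∃ k : ℤ, lam - 2 * σ = 1 + 2 * k) →
        (∀ ψ : 𝓗, P ψ = -ψ → R ψ = -ψ))
    ∧ ((∀ ψ : 𝓗, P ψ = -ψ → Complex.exp ((π * lam : ℝ) * Complex.I) • P (R ψ)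
          = -(Complex.exp ((2 * π * σ : ℝ) * Complex.I) • ψ)) →
        (∀ ψ : 𝓗, P ψ = -ψ → R ψ = -ψ) →
        (∃ k : ℤ, lam - 2 * σ = 1 + 2 * k))
    ∧ ((∃ k : ℤ, lam - 2 * σ = 1 + 2 * k) →
        (∀ ψ : 𝓗, P ψ = -ψ → R ψ = -ψ) →
        (∀ ψ : 𝓗, P ψ = -ψ → Complex.exp ((π * lam : ℝ) * Complex.I) • P (R ψ)
          = -(Complex.exp ((2 * π * σ : ℝ) * Complex.I) • ψ))) := by
  set c := Complex.exp ((π * lam : ℝ) * Complex.I) with hc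
  set d := Complex.exp ((2 * π * σ : ℝ) * Complex.I) with hd
  have hdne : d ≠ 0 := Complex.exp_ne_zero _
  have key : ∀ ψ : 𝓗, P ψ = -ψ → P (R ψ) = -(R ψ) := by
    intro ψ hψ; rw [hPR, hψ, map_neg]
  -- reformulation of (i) pointwise
  have reform : ∀ ψ : 𝓗, P ψ = -ψ →
      (c • P (R ψ) = -(d • ψ) ↔ c • R ψ = d • ψ) := by
    intro ψ hψ
    rw [key ψ hψ, smul_neg, neg_inj]
  refine ⟨?_, ?_, ?_⟩
  · intro h1 h2 ψ hψ
    have h := (reform ψ hψ).mp (h1 ψ hψ)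
    have hcd : c = -d := (exp_eq_neg_exp_iff σ lam).mpr h2
    rw [hcd] at h
    have h' : d • R ψ = d • (-ψ) := by
      rw [smul_neg, ← h, neg_smul, neg_neg]
    exact smul_right_injective 𝓗 hdne h'
  · intro h1 h3
    obtain ⟨ψ, hψ, hψ0⟩ := hne
    have h := (reform ψ hψ).mp (h1 ψ hψ)
    rw [h3 ψ hψ] at h
    have h' : (c + d) • ψ = 0 := by
      rw [add_smul, smul_neg] at *
      rw [← h]; abel
    rcases smul_eq_zero.mp h' with h'' | h''
    · exact (exp_eq_neg_exp_iff σ lam).mp (by linear_combination h'')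
    · exact absurd h'' hψ0
  · intro h2 h3 ψ hψ
    refine (reform ψ hψ).mpr ?_
    have hcd : c = -d := (exp_eq_neg_exp_iff σ lam).mpr h2
    rw [h3 ψ hψ, hcd, smul_neg, neg_smul, neg_neg]
end

section
/- Let (W(θ))_{θ∈ℝ} be a cone rotation group on 𝓗_rel = L²(H₃, 2·λ₃; ℂ), let σ, λ ∈ ℝ, and assume there exists κ ∈ {1, −1} such that e^{iπλ}·P·W(π) = κ·𝟙 (equality of operators on 𝓗_rel). Then there is NO unitary operator U : L²(ℝ³, λ₃; ℂ) → 𝓗_rel such that W(θ) = e^{iθ(λ−2σ)}·U ρ₃(2θ) U* for all θ ∈ ℝ (equality of operators on all of 𝓗_rel). [This is the paper's claim in Section 4 that in three spatial dimensions the unrestricted additivity condition ĵ_z = 2U(L_z+σ)U* cannot hold as it stands: it would force 𝟙 to lie in S¹·P_z, i.e., the reflection P would be a scalar multiple of the identity, which is false.] -/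
open MeasureTheory Real Set

noncomputable section

/-- The open half-space `H₃ = {(x,y,z) : x > 0}`. -/
def H3 : Set (ℝ × ℝ × ℝ) := {p | 0 < p.1}

/-- Rotation of space by angle `θ` about the `z`-axis. -/
def rot3 (θ : ℝ) (p : ℝ × ℝ × ℝ) : ℝ × ℝ × ℝ :=
  (p.1 * Real.cos θ - p.2.1 * Real.sin θ, p.1 * Real.sin θ + p.2.1 * Real.cos θ, p.2.2)

/-- The reflection `(x,y,z) ↦ (x,y,-z)`. -/
def flipz (p : ℝ × ℝ × ℝ) : ℝ × ℝ × ℝ := (p.1, p.2.1, -p.2.2)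

/-- The measure `2·λ₃` on the half-space `H₃`. -/
def μrel3 : Measure (ℝ × ℝ × ℝ) := (2 : ENNReal) • (volume.restrict H3)

/-- The two-particle relative state space `𝓗_rel = L²(H₃, 2·λ₃; ℂ)`. -/
abbrev HRel3 := Lp ℂ 2 μrel3

/-- The single-particle space `L²(ℝ³, λ₃; ℂ)`. -/
abbrev HOne3 := Lp ℂ 2 (volume : Measure (ℝ × ℝ × ℝ))

/-- The cylindrical polar angle of a point of space. -/
def parg3 (p : ℝ × ℝ × ℝ) : ℝ := Complex.arg (p.1 + p.2.1 * Complex.I)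

/-- The sector `{(r,φ,z) : r > 0, |φ| ≤ π/2 - ε}` in cylindrical coordinates. -/
def sector3 (ε : ℝ) : Set (ℝ × ℝ × ℝ) :=
  {p | (p.1, p.2.1) ≠ (0, 0) ∧ |parg3 p| ≤ π / 2 - ε}

open Classical in
/-- Extension by zero of a wave function on `H₃` to all of `ℝ³`. -/
def ext3 (ψ : HRel3) : ℝ × ℝ × ℝ → ℂ := fun p => if p ∈ H3 then ψ p else 0
/-- **No unrestricted additivity in three dimensions (Section 4).** For a cone
rotation group `W` on `𝓗_rel = L²(H₃, 2λ₃)` commuting with the `z`-parity `P`,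
with statistics phase `κ ∈ {1,-1}` given by `e^{iπλ}·P·W(π) = κ·𝟙`, there is
no unitary `U : L²(ℝ³) → 𝓗_rel` with `W(θ) = e^{iθ(λ-2σ)}·U ρ₃(2θ) U*` on all
of `𝓗_rel`. -/
theorem three_dim_no_unrestricted_additivity
    (W : ℝ → (HRel3 ≃ₗᵢ[ℂ] HRel3))
    (P : HRel3 ≃ₗᵢ[ℂ] HRel3)
    (hP : ∀ ψ : HRel3, ∀ᵐ p ∂μrel3, (P ψ) p = ψ (flipz p))
    (hW_add : ∀ θ θ' : ℝ, ∀ ψ : HRel3, W (θ + θ') ψ = W θ (W θ' ψ))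
    (hW_zero : ∀ ψ : HRel3, W 0 ψ = ψ)
    (hW_cont : ∀ ψ : HRel3, Continuous fun θ : ℝ => W θ ψ)
    (hW_2pi : ∀ ψ : HRel3, W (2 * π) ψ = ψ)
    (hW_loc : ∀ ε : ℝ, 0 < ε → ∀ θ : ℝ, |θ| < ε → ∀ ψ : HRel3,
      (∀ᵐ p ∂μrel3, p ∉ sector3 ε → ψ p = 0) →
      ∀ᵐ p ∂μrel3, (W θ ψ) p = ext3 ψ (rot3 (-θ) p))
    (hW_P : ∀ θ : ℝ, ∀ ψ : HRel3, W θ (P ψ) = P (W θ ψ))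
    (ρ : ℝ → (HOne3 ≃ₗᵢ[ℂ] HOne3))
    (hρ : ∀ θ : ℝ, ∀ f : HOne3,
      ∀ᵐ p ∂(volume : Measure (ℝ × ℝ × ℝ)), (ρ θ f) p = f (rot3 (-θ) p))
    (σ lam : ℝ) (κ : ℂ) (hκ : κ = 1 ∨ κ = -1)
    (hstat : ∀ ψ : HRel3,
      Complex.exp ((π * lam : ℝ) * Complex.I) • P (W π ψ) = κ • ψ) :
    ¬ ∃ U : HOne3 ≃ₗᵢ[ℂ] HRel3, ∀ θ : ℝ, ∀ ψ : HRel3,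
        W θ ψ = Complex.exp ((θ * (lam - 2 * σ) : ℝ) * Complex.I) •
          U (ρ (2 * θ) (U.symm ψ)) := by
  rintro ⟨U, hU⟩
  -- `ρ (2π)` is the identity
  have hρ_id : ∀ f : HOne3, ρ (2 * π) f = f := by
    intro f
    refine Lp.ext ?_
    filter_upwards [hρ (2 * π) f] with p hp
    rw [hp]
    congr 1
    simp [rot3, Real.cos_two_pi, Real.sin_two_pi]
  set c : ℂ := Complex.exp ((π * (lam - 2 * σ) : ℝ) * Complex.I) with hc
  have hWπ : ∀ ψ : HRel3, W π ψ = c • ψ := by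
    intro ψ
    rw [hU π ψ, hρ_id, U.apply_symm_apply]
  set e : ℂ := Complex.exp ((π * lam : ℝ) * Complex.I) with he
  set d : ℂ := (e * c)⁻¹ * κ with hd
  have hec : e * c ≠ 0 := mul_ne_zero (Complex.exp_ne_zero _) (Complex.exp_ne_zero _)
  have hdne : d ≠ 0 := by
    have hκ0 : κ ≠ 0 := by rcases hκ with h | h <;> simp [h]
    exact mul_ne_zero (inv_ne_zero hec) hκ0
  have hPd : ∀ ψ : HRel3, P ψ = d • ψ := by
    intro ψ
    have h := hstat ψ
    rw [hWπ, P.map_smul, smul_smul] at h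
    calc P ψ = ((e * c)⁻¹ * (e * c)) • P ψ := by
          rw [inv_mul_cancel₀ hec, one_smul]
      _ = (e * c)⁻¹ • ((e * c) • P ψ) := by rw [smul_smul]
      _ = (e * c)⁻¹ • (κ • ψ) := by rw [h]
      _ = d • ψ := by rw [smul_smul, hd]
  -- measurability facts
  have hH3 : MeasurableSet H3 := measurableSet_lt measurable_const measurable_fst
  -- flipz preserves Lebesgue measure
  have mpf : MeasurePreserving flipz (volume : Measure (ℝ × ℝ × ℝ)) volume := by
    have h : MeasurePreserving
        (Prod.map (id : ℝ → ℝ) (Prod.map (id : ℝ → ℝ) (fun x : ℝ => -x)))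
        ((volume : Measure ℝ).prod ((volume : Measure ℝ).prod (volume : Measure ℝ)))
        ((volume : Measure ℝ).prod ((volume : Measure ℝ).prod (volume : Measure ℝ))) :=
      (MeasurePreserving.id _).prod
        ((MeasurePreserving.id _).prod (Measure.measurePreserving_neg _))
    have hfe : flipz = Prod.map (id : ℝ → ℝ) (Prod.map (id : ℝ → ℝ) (fun x : ℝ => -x)) := rfl
    rw [hfe, Measure.volume_eq_prod]
    have : (volume : Measure (ℝ × ℝ)) = (volume : Measure ℝ).prod (volume : Measure ℝ) :=
      Measure.volume_eq_prod _ _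
    rw [this]
    exact h
  -- `flipz` sends `μrel3`-null sets to `μrel3`-null sets
  have hμrel : ∀ S : Set (ℝ × ℝ × ℝ), μrel3 S = (2 : ENNReal) * volume (S ∩ H3) := by
    intro S
    rw [μrel3, Measure.smul_apply, smul_eq_mul, Measure.restrict_apply' hH3]
  have hker : ∀ S : Set (ℝ × ℝ × ℝ), μrel3 S = 0 → μrel3 (flipz ⁻¹' S) = 0 := by
    intro S hS
    rw [hμrel] at hS ⊢
    have hSH : volume (S ∩ H3) = 0 := by
      rcases mul_eq_zero.mp hS with h | h
      · exact absurd h (by norm_num)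
      · exact h
    have hset : flipz ⁻¹' S ∩ H3 = flipz ⁻¹' (S ∩ H3) := by
      ext p
      simp only [Set.mem_inter_iff, Set.mem_preimage]
      constructor
      · rintro ⟨h1, h2⟩; exact ⟨h1, h2⟩
      · rintro ⟨h1, h2⟩; exact ⟨h1, h2⟩
    rw [hset, mpf.quasiMeasurePreserving.preimage_null hSH, mul_zero]
  -- the cube `A`
  set A : Set (ℝ × ℝ × ℝ) := Ioo (0:ℝ) 1 ×ˢ (Ioo (0:ℝ) 1 ×ˢ Ioo (0:ℝ) 1) with hAdef
  have hA : MeasurableSet A :=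
    measurableSet_Ioo.prod (measurableSet_Ioo.prod measurableSet_Ioo)
  have hAH3 : A ∩ H3 = A := by
    ext p
    simp only [Set.mem_inter_iff, and_iff_left_iff_imp]
    rintro ⟨h1, _⟩
    exact h1.1
  have hvolA : volume A = 1 := by
    rw [hAdef, Measure.volume_eq_prod, Measure.prod_prod, Measure.volume_eq_prod, Measure.prod_prod,
      Real.volume_Ioo]
    norm_num
  have hμA : μrel3 A = 2 := by
    rw [hμrel, hAH3, hvolA, mul_one]
  have hμA_top : μrel3 A ≠ ⊤ := by rw [hμA]; exact ENNReal.ofNat_ne_top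
  set ψ : HRel3 := indicatorConstLp 2 hA hμA_top (1 : ℂ) with hψdef
  have h1 : (ψ : (ℝ × ℝ × ℝ) → ℂ) =ᵐ[μrel3] A.indicator (fun _ => (1 : ℂ)) :=
    indicatorConstLp_coeFn
  have h4 : (fun p => (ψ : (ℝ × ℝ × ℝ) → ℂ) (flipz p)) =ᵐ[μrel3]
      (fun p => A.indicator (fun _ => (1 : ℂ)) (flipz p)) := by
    have hN : μrel3 {p | ¬ ((ψ : (ℝ × ℝ × ℝ) → ℂ) p = A.indicator (fun _ => (1 : ℂ)) p)} = 0 :=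
      ae_iff.mp h1
    refine ae_iff.mpr ?_
    refine measure_mono_null (fun p hp => ?_) (hker _ hN)
    exact hp
  have h3 : (P ψ : (ℝ × ℝ × ℝ) → ℂ) =ᵐ[μrel3]
      (fun p => d * A.indicator (fun _ => (1 : ℂ)) p) := by
    rw [hPd ψ]
    filter_upwards [Lp.coeFn_smul d ψ, h1] with p hp hq
    rw [hp]
    simp only [Pi.smul_apply, smul_eq_mul, hq]
  have heq : ∀ᵐ p ∂μrel3, d * A.indicator (fun _ => (1 : ℂ)) p
      = A.indicator (fun _ => (1 : ℂ)) (flipz p) := by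
    filter_upwards [hP ψ, h3, h4] with p h2 h3 h4
    rw [← h3, h2, h4]
  have hAnull : μrel3 A = 0 := by
    refine measure_mono_null (fun p hp => ?_) (ae_iff.mp heq)
    simp only [Set.mem_setOf_eq]
    have hind : A.indicator (fun _ => (1 : ℂ)) p = 1 := Set.indicator_of_mem hp _
    have hout : flipz p ∉ A := by
      intro hmem
      have h1 : 0 < p.2.2 := hp.2.2.1
      have h2 : 0 < -p.2.2 := hmem.2.2.1
      linarith
    have hind2 : A.indicator (fun _ => (1 : ℂ)) (flipz p) = 0 :=
      Set.indicator_of_notMem hout _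
    rw [hind, hind2, mul_one]
    exact hdne
  rw [hμA] at hAnull
  exact absurd hAnull (by norm_num)
end
end
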